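/- Let p be a nonzero prime ideal of O_K with absolute norm N(p) = q and let ℓ ≥ 1. Then d_E(L_ℓ)² / d_E(L_0)² ≥ q^{2ℓ/m}, where L_0 = τ(O_K) and L_ℓ = τ(p^ℓ). Consequently, any q-ary code C_0 of length n with minimum Hamming distance at least ⌈ d_E(L_ℓ)² / d_E(L_0)² ⌉ must have n ≥ ⌈ q^{2ℓ/m} ⌉; equivalently, ℓ ≤ ⌊ (m/2)·log_q n ⌋. -/

import Mathlib

open scoped BigOperators
open MeasureTheory

noncomputable section

/-- The index set for `ℝ^{s+2t}`: `s` real coordinates and `t` pairs of coordinates. -/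
abbrev PackIdx (s t : ℕ) := Fin s ⊕ Fin t × Fin 2

/-- The canonical embedding `τ : K → ℝ^{s+2t}`,
`τ(α) = (ρ₁(α),…,ρ_s(α), √2·Re σ₁(α), √2·Im σ₁(α), …, √2·Re σ_t(α), √2·Im σ_t(α))`. -/
def tauEmb {K : Type*} [Field K] {s t : ℕ}
    (ρ : Fin s → (K →+* ℝ)) (σ : Fin t → (K →+* ℂ)) (α : K) :
    EuclideanSpace ℝ (PackIdx s t) :=
  (EuclideanSpace.equiv (PackIdx s t) ℝ).symm <|
    Sum.elim (fun i => ρ i α)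
      (fun p => if p.2 = (0 : Fin 2) then Real.sqrt 2 * (σ p.1 α).re
                else Real.sqrt 2 * (σ p.1 α).im)

/-- The system of `s + 2t` field embeddings `K → ℂ` determined by the data `ρ, σ`:
the real embeddings `ρᵢ` and the complex embeddings `σⱼ` together with their conjugates. -/
def embSystem {K : Type*} [Field K] {s t : ℕ}
    (ρ : Fin s → (K →+* ℝ)) (σ : Fin t → (K →+* ℂ)) : PackIdx s t → (K →+* ℂ) :=
  Sum.elim (fun i => Complex.ofRealHom.comp (ρ i))
    (fun p => if p.2 = (0 : Fin 2) then σ p.1 else (starRingEnd ℂ).comp (σ p.1))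

/-- `ρ, σ` list exactly the real embeddings and the pairs of complex-conjugate embeddings
of `K`, without repetition: the associated system of `s+2t` embeddings `K → ℂ` is a
bijective enumeration of all field embeddings `K → ℂ`. -/
def IsEmbSystem {K : Type*} [Field K] {s t : ℕ}
    (ρ : Fin s → (K →+* ℝ)) (σ : Fin t → (K →+* ℂ)) : Prop :=
  Function.Bijective (embSystem ρ σ)

/-- The minimum (infimal) Euclidean distance between two distinct points of `P`. -/
def minDist {E : Type*} [MetricSpace E] (P : Set E) : ℝ :=
  sInf {d : ℝ | ∃ x ∈ P, ∃ y ∈ P, x ≠ y ∧ dist x y = d}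

/-- The volume `V_N` of the unit ball in `ℝ^N` (with index set `ι`, `N = |ι|`). -/
def unitBallVol (ι : Type*) [Fintype ι] : ℝ :=
  (volume (Metric.ball (0 : EuclideanSpace ℝ ι) 1)).toReal

/-- The packing density
`Δ(P) = limsup_{R→∞} |P ∩ B(R)| · r^N · V_N / vol(B(R+r))`, where `r = d_E(P)/2`. -/
def packDensity {ι : Type*} [Fintype ι] (P : Set (EuclideanSpace ℝ ι)) : ℝ :=
  Filter.limsup (fun R : ℝ =>
    (Nat.card (P ∩ Metric.closedBall 0 R : Set (EuclideanSpace ℝ ι)) : ℝ) *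
      (minDist P / 2) ^ (Fintype.card ι) * unitBallVol ι /
      (volume (Metric.closedBall (0 : EuclideanSpace ℝ ι) (R + minDist P / 2))).toReal)
    Filter.atTop

/-- `L_I = τ(I)`, the image in `ℝ^{s+2t}` of an ideal `I` of the ring of integers under the
canonical embedding. -/
def idealImage {K : Type*} [Field K] [NumberField K] {s t : ℕ}
    (ρ : Fin s → (K →+* ℝ)) (σ : Fin t → (K →+* ℂ))
    (I : Ideal (NumberField.RingOfIntegers K)) : Set (EuclideanSpace ℝ (PackIdx s t)) :=
  (fun a : NumberField.RingOfIntegers K =>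
    tauEmb ρ σ (algebraMap (NumberField.RingOfIntegers K) K a)) '' (I : Set _)

/-- The coordinatewise extension `τ : K^n → ℝ^{mn}`. -/
def tauEmbN {K : Type*} [Field K] {s t : ℕ} {n : ℕ}
    (ρ : Fin s → (K →+* ℝ)) (σ : Fin t → (K →+* ℂ)) (c : Fin n → K) :
    EuclideanSpace ℝ (Fin n × PackIdx s t) :=
  (EuclideanSpace.equiv (Fin n × PackIdx s t) ℝ).symm fun p => tauEmb ρ σ (c p.1) p.2

/-- The Cartesian product `L^n ⊆ ℝ^{mn}` of `n` copies of `L ⊆ ℝ^m`. -/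
def prodSet {ι : Type*} (n : ℕ) (L : Set (EuclideanSpace ℝ ι)) :
    Set (EuclideanSpace ℝ (Fin n × ι)) :=
  {x | ∀ j : Fin n,
    ((EuclideanSpace.equiv ι ℝ).symm fun i => (EuclideanSpace.equiv (Fin n × ι) ℝ) x (j, i)) ∈ L}

/-- `S` is a valid alphabet set at level `i`: a set of `q` elements of `p^i` containing `0`
whose residues modulo `p^{i+1}` represent the `q` distinct elements of `p^i/p^{i+1}`. -/
def IsRepSet {K : Type*} [Field K] [NumberField K]
    (p : Ideal (NumberField.RingOfIntegers K)) (i q : ℕ)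
    (S : Set (NumberField.RingOfIntegers K)) : Prop :=
  S ⊆ (p ^ i : Ideal (NumberField.RingOfIntegers K)) ∧ (0 : NumberField.RingOfIntegers K) ∈ S ∧
    Nat.card S = q ∧
    (∀ x ∈ S, ∀ y ∈ S, x ≠ y → x - y ∉ (p ^ (i + 1) : Ideal (NumberField.RingOfIntegers K))) ∧
    (∀ z ∈ (p ^ i : Ideal (NumberField.RingOfIntegers K)), ∃ a ∈ S,
      z - a ∈ (p ^ (i + 1) : Ideal (NumberField.RingOfIntegers K)))

/-- Hamming distance between two words. -/
def hDist {n : ℕ} {A : Type*} (u v : Fin n → A) : ℕ := Nat.card {j : Fin n // u j ≠ v j}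

/-- The minimum Hamming distance of a code `C`. -/
def codeMinDist {n : ℕ} {A : Type*} (C : Set (Fin n → A)) : ℕ :=
  sInf {d : ℕ | ∃ u ∈ C, ∃ v ∈ C, u ≠ v ∧ hDist u v = d}

/-- `C` is an `(n, M, d)`-code over the alphabet set `S`. -/
def IsCode {A : Type*} {n : ℕ} (S : Set A) (M d : ℕ) (C : Set (Fin n → A)) : Prop :=
  (∀ c ∈ C, ∀ j, c j ∈ S) ∧ Nat.card C = M ∧ codeMinDist C = d

/-- The translate `τ(c) + P` of `P` by the embedded codeword `c`. -/
def wordTranslate {K : Type*} [Field K] [NumberField K] {s t n : ℕ}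
    (ρ : Fin s → (K →+* ℝ)) (σ : Fin t → (K →+* ℂ))
    (c : Fin n → NumberField.RingOfIntegers K)
    (P : Set (EuclideanSpace ℝ (Fin n × PackIdx s t))) :
    Set (EuclideanSpace ℝ (Fin n × PackIdx s t)) :=
  {z | ∃ x ∈ P, z = tauEmbN ρ σ (fun j => algebraMap (NumberField.RingOfIntegers K) K (c j)) + x}

/-- The concatenation `τ(C) + P = { τ(c) + p : c ∈ C, p ∈ P }`. -/
def codeTranslate {K : Type*} [Field K] [NumberField K] {s t n : ℕ}
    (ρ : Fin s → (K →+* ℝ)) (σ : Fin t → (K →+* ℂ))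
    (C : Set (Fin n → NumberField.RingOfIntegers K))
    (P : Set (EuclideanSpace ℝ (Fin n × PackIdx s t))) :
    Set (EuclideanSpace ℝ (Fin n × PackIdx s t)) :=
  {z | ∃ c ∈ C, ∃ x ∈ P,
    z = tauEmbN ρ σ (fun j => algebraMap (NumberField.RingOfIntegers K) K (c j)) + x}

/-- The concatenation `τ(𝒞) + P = { Σ_{i<ℓ} τ(cᵢ) + p : cᵢ ∈ Cᵢ, p ∈ P }` of a family of codes. -/
def famTranslate {K : Type*} [Field K] [NumberField K] {s t n ℓ : ℕ}
    (ρ : Fin s → (K →+* ℝ)) (σ : Fin t → (K →+* ℂ))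
    (C : Fin ℓ → Set (Fin n → NumberField.RingOfIntegers K))
    (P : Set (EuclideanSpace ℝ (Fin n × PackIdx s t))) :
    Set (EuclideanSpace ℝ (Fin n × PackIdx s t)) :=
  {z | ∃ c : Fin ℓ → (Fin n → NumberField.RingOfIntegers K), (∀ i, c i ∈ C i) ∧ ∃ x ∈ P,
    z = (∑ i : Fin ℓ,
      tauEmbN ρ σ (fun j => algebraMap (NumberField.RingOfIntegers K) K (c i j))) + x}


/-! ### Auxiliary lemmas -/

section Aux

variable {K : Type*} [Field K] {s t : ℕ}
  (ρ : Fin s → (K →+* ℝ)) (σ : Fin t → (K →+* ℂ))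

lemma tauEmb_apply (γ : K) (idx : PackIdx s t) :
    tauEmb ρ σ γ idx = Sum.elim (fun i => ρ i γ)
      (fun p => if p.2 = (0 : Fin 2) then Real.sqrt 2 * (σ p.1 γ).re
                else Real.sqrt 2 * (σ p.1 γ).im) idx := rfl

lemma tauEmb_sub (a b : K) : tauEmb ρ σ a - tauEmb ρ σ b = tauEmb ρ σ (a - b) := by
  ext idx
  have : (tauEmb ρ σ a - tauEmb ρ σ b) idx = tauEmb ρ σ a idx - tauEmb ρ σ b idx := rfl
  rw [this, tauEmb_apply, tauEmb_apply, tauEmb_apply]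
  rcases idx with i | ⟨j, k⟩
  · simp [map_sub]
  · rcases Fin.exists_fin_two.mp ⟨k, rfl⟩ with h | h <;> subst h <;>
      simp [map_sub] <;> ring

lemma tauEmb_zero : tauEmb ρ σ (0 : K) = 0 := by
  ext idx
  rw [tauEmb_apply]
  rcases idx with i | ⟨j, k⟩
  · simpa using rfl
  · rcases Fin.exists_fin_two.mp ⟨k, rfl⟩ with h | h <;> subst h <;> simpa using rfl

lemma normsq_tauEmb [NumberField K] (hemb : IsEmbSystem ρ σ) (γ : K) :
    ‖tauEmb ρ σ γ‖ ^ 2 = ∑ φ : (K →+* ℂ), ‖φ γ‖ ^ 2 := by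
  rw [EuclideanSpace.norm_eq, Real.sq_sqrt (by positivity)]
  rw [← Fintype.sum_bijective (embSystem ρ σ) hemb _ _ (fun idx => rfl)]
  rw [Fintype.sum_sum_type, Fintype.sum_sum_type]
  congr 1
  · refine Finset.sum_congr rfl fun i _ => ?_
    simp [tauEmb_apply, embSystem, Real.norm_eq_abs, sq_abs, Complex.norm_real]
  · rw [Fintype.sum_prod_type, Fintype.sum_prod_type]
    refine Finset.sum_congr rfl fun j _ => ?_
    rw [Fin.sum_univ_two, Fin.sum_univ_two]
    have h0 : ((0 : Fin 2) = 0) = True := by simp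
    have h1 : ((1 : Fin 2) = 0) = False := by simp
    simp only [tauEmb_apply, embSystem, Sum.elim_inr, h0, h1, if_true, if_false,
      Real.norm_eq_abs, sq_abs, RingHom.coe_comp, Function.comp_apply,
      Complex.conj_re, Complex.conj_im]
    have h2 : Real.sqrt 2 ^ 2 = 2 := Real.sq_sqrt (by norm_num)
    have habs : ∀ z : ℂ, ‖z‖ ^ 2 = z.re ^ 2 + z.im ^ 2 := by
      intro z; rw [Complex.sq_norm, Complex.normSq_apply]; ring
    rw [habs, habs, mul_pow, mul_pow, h2]
    simp only [Complex.conj_re, Complex.conj_im]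
    ring

variable [NumberField K]

lemma prod_abs_emb (x : K) :
    ∏ φ : (K →+* ℂ), ‖φ x‖ = |((Algebra.norm ℚ x : ℚ) : ℝ)| := by
  have h := congrArg norm (Algebra.norm_eq_prod_embeddings ℚ ℂ (x := x))
  rw [norm_prod] at h
  rw [Fintype.prod_equiv (RingHom.equivRatAlgHom K ℂ) (fun f => ‖f x‖)
      (fun φ => ‖φ x‖) fun _ => by simp [RingHom.equivRatAlgHom_apply]]
  rw [← h]
  rw [show (algebraMap ℚ ℂ) (Algebra.norm ℚ x) = (((Algebra.norm ℚ x : ℚ) : ℝ) : ℂ) by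
    push_cast [Complex.coe_algebraMap]; norm_cast, Complex.norm_real, Real.norm_eq_abs]

lemma amgm_sum_lower (γ : K) (B : ℝ) (hB : 0 ≤ B)
    (hN : B ≤ |((Algebra.norm ℚ γ : ℚ) : ℝ)|) :
    (Fintype.card (K →+* ℂ) : ℝ) * B ^ (2 / (Fintype.card (K →+* ℂ) : ℝ)) ≤
      ∑ φ : (K →+* ℂ), ‖φ γ‖ ^ 2 := by
  set m0 := Fintype.card (K →+* ℂ) with hm0
  have hmpos : 0 < m0 := by
    rw [hm0, NumberField.Embeddings.card K ℂ]
    exact Module.finrank_pos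
  have hmR : (0 : ℝ) < (m0 : ℝ) := by exact_mod_cast hmpos
  have hz : ∀ φ : (K →+* ℂ), (0:ℝ) ≤ ‖φ γ‖ ^ 2 := fun φ => sq_nonneg _
  have hgm := Real.geom_mean_le_arith_mean_weighted Finset.univ
    (fun _ : (K →+* ℂ) => 1 / (m0 : ℝ)) (fun φ => ‖φ γ‖ ^ 2)
    (fun _ _ => by positivity)
    (by simp [Finset.card_univ, ← hm0])
    (fun φ _ => hz φ)
  have hprod : ∏ φ : (K →+* ℂ), (‖φ γ‖ ^ 2) ^ (1 / (m0 : ℝ)) =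
      (|((Algebra.norm ℚ γ : ℚ) : ℝ)| ^ 2) ^ (1 / (m0 : ℝ)) := by
    rw [Real.finset_prod_rpow _ _ (fun φ _ => hz φ)]
    congr 1
    rw [← prod_abs_emb γ, ← Finset.prod_pow]
  have hsum : ∑ φ : (K →+* ℂ), (1 / (m0 : ℝ)) * (‖φ γ‖ ^ 2)
      = (1 / (m0 : ℝ)) * ∑ φ : (K →+* ℂ), ‖φ γ‖ ^ 2 := by
    rw [Finset.mul_sum]
  rw [hprod, hsum] at hgm
  have hBle : B ^ (2 / (m0 : ℝ)) ≤
      (|((Algebra.norm ℚ γ : ℚ) : ℝ)| ^ 2) ^ (1 / (m0 : ℝ)) := by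
    rw [← Real.rpow_natCast (|((Algebra.norm ℚ γ : ℚ) : ℝ)|) 2, ← Real.rpow_mul (abs_nonneg _)]
    have : ((2:ℕ):ℝ) * (1 / (m0:ℝ)) = 2 / (m0:ℝ) := by push_cast; ring
    rw [this]
    exact Real.rpow_le_rpow hB hN (by positivity)
  calc (m0 : ℝ) * B ^ (2 / (m0 : ℝ))
      ≤ (m0 : ℝ) * ((|((Algebra.norm ℚ γ : ℚ) : ℝ)| ^ 2) ^ (1 / (m0 : ℝ))) := by
        exact mul_le_mul_of_nonneg_left hBle (le_of_lt hmR)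
    _ ≤ (m0 : ℝ) * ((1 / (m0 : ℝ)) * ∑ φ : (K →+* ℂ), ‖φ γ‖ ^ 2) :=
        mul_le_mul_of_nonneg_left hgm (le_of_lt hmR)
    _ = ∑ φ : (K →+* ℂ), ‖φ γ‖ ^ 2 := by field_simp

lemma norm_lower_of_mem (p : Ideal (NumberField.RingOfIntegers K)) (q i : ℕ)
    (hq : Ideal.absNorm p = q)
    (δ : NumberField.RingOfIntegers K) (hδ : δ ∈ (p ^ i : Ideal _)) (hδ0 : δ ≠ 0) :
    ((q : ℝ)) ^ i ≤
      |((Algebra.norm ℚ (algebraMap (NumberField.RingOfIntegers K) K δ) : ℚ) : ℝ)| := by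
  have h1 : Ideal.absNorm (p ^ i) ∣ Ideal.absNorm (Ideal.span {δ}) :=
    Ideal.absNorm_dvd_absNorm_of_le ((Ideal.span_singleton_le_iff_mem _).mpr hδ)
  have h2 : Ideal.absNorm (Ideal.span {δ}) ≠ 0 := by
    rw [ne_eq, Ideal.absNorm_eq_zero_iff, Ideal.span_singleton_eq_bot]; exact hδ0
  have h3 : q ^ i ≤ Ideal.absNorm (Ideal.span {δ}) := by
    rw [← hq, ← map_pow]
    exact Nat.le_of_dvd (Nat.pos_of_ne_zero h2) h1
  rw [Ideal.absNorm_span_singleton δ] at h3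
  rw [← NumberField.RingOfIntegers.coe_eq_algebraMap, ← Algebra.coe_norm_int]
  have : |(((Algebra.norm ℤ δ : ℤ) : ℚ) : ℝ)| = (((Algebra.norm ℤ δ).natAbs : ℕ) : ℝ) := by
    push_cast [Nat.cast_natAbs]
    norm_num
  rw [this]
  exact_mod_cast h3

lemma tauEmb_ne_zero (hemb : IsEmbSystem ρ σ) (γ : K) (hγ : γ ≠ 0) :
    tauEmb ρ σ γ ≠ 0 := by
  intro h
  have h2 := normsq_tauEmb ρ σ hemb γ
  rw [h, norm_zero] at h2
  have hnonempty : Nonempty (K →+* ℂ) := by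
    apply Fintype.card_pos_iff.mp
    rw [NumberField.Embeddings.card K ℂ]
    exact Module.finrank_pos
  obtain ⟨φ⟩ := hnonempty
  have hall := (Finset.sum_eq_zero_iff_of_nonneg
    (fun ψ _ => sq_nonneg (‖ψ γ‖))).mp (by rw [← h2]; norm_num) φ (Finset.mem_univ _)
  have : φ γ = 0 := by
    have := pow_eq_zero_iff (n := 2) (by norm_num) |>.mp hall
    simpa using this
  exact hγ (by simpa using φ.injective (by simpa using this))

lemma minDist_lower (hemb : IsEmbSystem ρ σ) (p : Ideal (NumberField.RingOfIntegers K))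
    (hp0 : p ≠ ⊥) (q : ℕ) (hq : Ideal.absNorm p = q) (i : ℕ) :
    Real.sqrt ((Fintype.card (K →+* ℂ) : ℝ) *
        ((q : ℝ) ^ i) ^ (2 / (Fintype.card (K →+* ℂ) : ℝ)))
      ≤ minDist (idealImage ρ σ (p ^ i)) := by
  set m0 := Fintype.card (K →+* ℂ) with hm0
  set R := NumberField.RingOfIntegers K
  apply le_csInf
  · obtain ⟨x, hxp, hx0⟩ := Submodule.exists_mem_ne_zero_of_ne_bot hp0
    have hmem : x ^ i ∈ (p ^ i : Ideal R) := Ideal.pow_mem_pow hxp i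
    have hne : tauEmb ρ σ (algebraMap R K (x ^ i)) ≠ tauEmb ρ σ (algebraMap R K 0) := by
      intro h
      have h0 : tauEmb ρ σ (algebraMap R K (x ^ i) - algebraMap R K 0) = 0 := by
        rw [← tauEmb_sub, h, sub_self]
      refine tauEmb_ne_zero ρ σ hemb _ ?_ h0
      simp only [map_zero, sub_zero]
      intro hc
      exact pow_ne_zero i hx0 (NumberField.RingOfIntegers.coe_eq_zero_iff.mp hc)
    exact ⟨_, _, ⟨x ^ i, hmem, rfl⟩, _, ⟨0, Submodule.zero_mem _, rfl⟩, hne, rfl⟩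
  · rintro d ⟨x, ⟨a, ha, rfl⟩, y, ⟨b, hb, rfl⟩, hxy, rfl⟩
    have hδ : a - b ∈ (p ^ i : Ideal R) := sub_mem ha hb
    have hδ0 : a - b ≠ 0 := by
      intro hc
      apply hxy
      have : a = b := by rwa [sub_eq_zero] at hc
      rw [this]
    have hkey : (m0 : ℝ) * ((q : ℝ) ^ i) ^ (2 / (m0 : ℝ)) ≤
        (dist (tauEmb ρ σ (algebraMap R K a)) (tauEmb ρ σ (algebraMap R K b))) ^ 2 := by
      rw [dist_eq_norm, tauEmb_sub, ← map_sub]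
      rw [normsq_tauEmb ρ σ hemb]
      exact amgm_sum_lower _ _ (by positivity) (norm_lower_of_mem p q i hq _ hδ hδ0)
    have hd0 : (0:ℝ) ≤ dist (tauEmb ρ σ (algebraMap R K a)) (tauEmb ρ σ (algebraMap R K b)) :=
      dist_nonneg
    calc Real.sqrt ((m0 : ℝ) * ((q : ℝ) ^ i) ^ (2 / (m0 : ℝ)))
        ≤ Real.sqrt ((dist (tauEmb ρ σ (algebraMap R K a))
            (tauEmb ρ σ (algebraMap R K b))) ^ 2) := Real.sqrt_le_sqrt hkey
      _ = _ := by rw [Real.sqrt_sq hd0]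

end Aux

/-- `d_E(L_ℓ)²/d_E(L_0)² ≥ q^{2ℓ/m}`; consequently any `q`-ary code of
length `n` (with at least two codewords) whose minimum Hamming distance is at least
`⌈d_E(L_ℓ)²/d_E(L_0)²⌉` must have `n ≥ ⌈q^{2ℓ/m}⌉`, equivalently `ℓ ≤ ⌊(m/2)·log_q n⌋`. -/
theorem statement14 {K : Type*} [Field K] [NumberField K] {s t m : ℕ}
    (ρ : Fin s → (K →+* ℝ)) (σ : Fin t → (K →+* ℂ)) (hemb : IsEmbSystem ρ σ)
    (hm : m = s + 2 * t)
    (p : Ideal (NumberField.RingOfIntegers K)) (hp : p.IsPrime) (hp0 : p ≠ ⊥)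
    (q : ℕ) (hq : Ideal.absNorm p = q) (ℓ : ℕ) (hℓ : 1 ≤ ℓ) :
    (q : ℝ) ^ (2 * (ℓ : ℝ) / (m : ℝ)) ≤
      (minDist (idealImage ρ σ (p ^ ℓ))) ^ 2 / (minDist (idealImage ρ σ (p ^ 0))) ^ 2 ∧
    ∀ (n : ℕ) (C₀ : Set (Fin n → NumberField.RingOfIntegers K)),
      (∃ u ∈ C₀, ∃ v ∈ C₀, u ≠ v) →
      (∀ u ∈ C₀, ∀ v ∈ C₀, u ≠ v →
        ⌈(minDist (idealImage ρ σ (p ^ ℓ))) ^ 2 /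
          (minDist (idealImage ρ σ (p ^ 0))) ^ 2⌉₊ ≤ hDist u v) →
      ⌈(q : ℝ) ^ (2 * (ℓ : ℝ) / (m : ℝ))⌉₊ ≤ n ∧
        ℓ ≤ ⌊(m : ℝ) / 2 * Real.logb (q : ℝ) (n : ℝ)⌋₊ := by
  classical
  set R := NumberField.RingOfIntegers K with hR
  have hcard : Fintype.card (K →+* ℂ) = m := by
    rw [← Fintype.card_of_bijective hemb]
    simp only [Fintype.card_sum, Fintype.card_prod, Fintype.card_fin, hm]
    ring
  have hmpos : 0 < m := by
    rw [← hcard, NumberField.Embeddings.card K ℂ]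
    exact Module.finrank_pos
  have hmR : (0 : ℝ) < (m : ℝ) := by exact_mod_cast hmpos
  have hq2 : 2 ≤ q := by
    have h0 : q ≠ 0 := by
      rw [← hq, ne_eq, Ideal.absNorm_eq_zero_iff]; exact hp0
    have h1 : q ≠ 1 := by
      rw [← hq, ne_eq, Ideal.absNorm_eq_one_iff]; exact hp.ne_top
    omega
  have hq1R : (1 : ℝ) < (q : ℝ) := by exact_mod_cast lt_of_lt_of_le one_lt_two (by exact_mod_cast hq2)
  have hqR0 : (0 : ℝ) < (q : ℝ) := by linarith
  set m0 := Fintype.card (K →+* ℂ) with hm0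
  have hm0R : (m0 : ℝ) = (m : ℝ) := by exact_mod_cast hcard
  set Q : ℝ := (q : ℝ) ^ (2 * (ℓ : ℝ) / (m : ℝ)) with hQ
  have hQpos : 0 < Q := Real.rpow_pos_of_pos hqR0 _
  set a := minDist (idealImage ρ σ (p ^ ℓ)) with haDef
  set b := minDist (idealImage ρ σ (p ^ 0)) with hbDef
  have hQB : ((q : ℝ) ^ ℓ) ^ (2 / (m0 : ℝ)) = Q := by
    rw [← Real.rpow_natCast (q : ℝ) ℓ, ← Real.rpow_mul (le_of_lt hqR0), hQ, hm0R]
    congr 1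
    ring
  have ha : Real.sqrt ((m0 : ℝ) * ((q : ℝ) ^ ℓ) ^ (2 / (m0 : ℝ))) ≤ a :=
    minDist_lower ρ σ hemb p hp0 q hq ℓ
  have ha2 : (m0 : ℝ) * Q ≤ a ^ 2 := by
    rw [← hQB]
    calc (m0 : ℝ) * ((q : ℝ) ^ ℓ) ^ (2 / (m0 : ℝ))
        = Real.sqrt ((m0 : ℝ) * ((q : ℝ) ^ ℓ) ^ (2 / (m0 : ℝ))) ^ 2 := by
          rw [Real.sq_sqrt (by positivity)]
      _ ≤ a ^ 2 := pow_le_pow_left₀ (Real.sqrt_nonneg _) ha 2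
  have hbdown : Real.sqrt (m0 : ℝ) ≤ b := by
    have h := minDist_lower ρ σ hemb p hp0 q hq 0
    rwa [pow_zero, Real.one_rpow, mul_one] at h
  have hm0pos : (0 : ℝ) < (m0 : ℝ) := by rw [hm0R]; exact hmR
  have hbpos : 0 < b := lt_of_lt_of_le (Real.sqrt_pos.mpr hm0pos) hbdown
  have hbup : b ≤ Real.sqrt (m0 : ℝ) := by
    have hone : (1 : R) ∈ (p ^ 0 : Ideal R) := by
      rw [pow_zero, Ideal.one_eq_top]; exact Submodule.mem_top
    have hzero : (0 : R) ∈ (p ^ 0 : Ideal R) := Submodule.zero_mem _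
    have hne : tauEmb ρ σ (algebraMap R K 1) ≠ tauEmb ρ σ (algebraMap R K 0) := by
      intro h
      have h0 : tauEmb ρ σ (algebraMap R K 1 - algebraMap R K 0) = 0 := by
        rw [← tauEmb_sub, h, sub_self]
      refine tauEmb_ne_zero ρ σ hemb _ ?_ h0
      simp
    have hdistval : dist (tauEmb ρ σ (algebraMap R K 1)) (tauEmb ρ σ (algebraMap R K 0)) =
        Real.sqrt (m0 : ℝ) := by
      rw [dist_eq_norm, tauEmb_sub, ← map_sub, sub_zero]
      rw [← Real.sqrt_sq (norm_nonneg (tauEmb ρ σ (algebraMap R K 1)))]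
      congr 1
      rw [normsq_tauEmb ρ σ hemb]
      simp [map_one, hm0]
    apply csInf_le
    · exact ⟨0, by rintro d ⟨x, _, y, _, _, rfl⟩; exact dist_nonneg⟩
    · exact ⟨_, ⟨1, hone, rfl⟩, _, ⟨0, hzero, rfl⟩, hne, hdistval⟩
  have hb2 : b ^ 2 ≤ (m0 : ℝ) := by
    calc b ^ 2 ≤ Real.sqrt (m0 : ℝ) ^ 2 := pow_le_pow_left₀ (le_of_lt hbpos) hbup 2
      _ = (m0 : ℝ) := Real.sq_sqrt (le_of_lt hm0pos)
  have part1 : Q ≤ a ^ 2 / b ^ 2 := by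
    rw [le_div_iff₀ (by positivity)]
    calc Q * b ^ 2 ≤ Q * (m0 : ℝ) := by
          exact mul_le_mul_of_nonneg_left hb2 (le_of_lt hQpos)
      _ = (m0 : ℝ) * Q := mul_comm _ _
      _ ≤ a ^ 2 := ha2
  refine ⟨part1, ?_⟩
  intro n C₀ hex hmin
  obtain ⟨u, hu, v, hv, huv⟩ := hex
  have hd := hmin u hu v hv huv
  have hdn : hDist u v ≤ n := by
    have h1 : Nat.card {j : Fin n // u j ≠ v j} ≤ Nat.card (Fin n) :=
      Nat.card_le_card_of_injective _ Subtype.val_injective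
    simpa [hDist, Nat.card_eq_fintype_card] using h1
  have hceil : ⌈Q⌉₊ ≤ n := le_trans (le_trans (Nat.ceil_le_ceil part1) hd) hdn
  refine ⟨hceil, ?_⟩
  have hQn : Q ≤ (n : ℝ) := Nat.ceil_le.mp hceil
  have hlog : Real.logb (q : ℝ) Q ≤ Real.logb (q : ℝ) (n : ℝ) :=
    Real.logb_le_logb_of_le hq1R hQpos hQn
  rw [hQ, Real.logb_rpow hqR0 (ne_of_gt hq1R)] at hlog
  apply Nat.le_floor
  calc (ℓ : ℝ) = (m : ℝ) / 2 * (2 * (ℓ : ℝ) / (m : ℝ)) := by field_simp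
    _ ≤ (m : ℝ) / 2 * Real.logb (q : ℝ) (n : ℝ) :=
        mul_le_mul_of_nonneg_left hlog (by positivity)

end
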